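/- Let μ1, μ2 > 0 and ρ ≥ 0 be real numbers. Then the Lebesgue integral ∫₀^∞ exp(−min(ρ, x)/μ1)·(1/μ2)·exp(−x/μ2) dx equals (μ1/(μ1+μ2))·(1 − exp(−ρ(μ1+μ2)/(μ1·μ2))) + exp(−ρ/μ1)·exp(−ρ/μ2). (Equivalently, for an exponential random variable X' with mean μ2, this is E[exp(−min(ρ, X')/μ1)].) -/

import Mathlib

open MeasureTheory Set Real

lemma exp_neg_mul_integral_Ioi (b c : ℝ) (hb : 0 < b) :
    ∫ x in Set.Ioi c, Real.exp (-(b * x)) = Real.exp (-(b * c)) / b := by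
  have h := integral_comp_mul_left_Ioi (fun x => Real.exp (-x)) c hb
  simp only [smul_eq_mul] at h
  rw [h, integral_exp_neg_Ioi]; ring

lemma exp_neg_mul_integral_Ioc (b c : ℝ) (hb : 0 < b) (hc : 0 ≤ c) :
    ∫ x in Set.Ioc 0 c, Real.exp (-(b * x)) = (1 - Real.exp (-(b * c))) / b := by
  have hunion : Set.Ioc (0:ℝ) c ∪ Set.Ioi c = Set.Ioi 0 := Set.Ioc_union_Ioi_eq_Ioi hc
  have hint : ∀ a : ℝ, IntegrableOn (fun x => Real.exp (-(b * x))) (Set.Ioi a) := by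
    intro a; simpa [neg_mul] using exp_neg_integrableOn_Ioi a hb
  have hIoc : IntegrableOn (fun x => Real.exp (-(b * x))) (Set.Ioc 0 c) :=
    (hint 0).mono_set Set.Ioc_subset_Ioi_self
  have hsplit :
      (∫ x in Set.Ioc 0 c, Real.exp (-(b * x))) + ∫ x in Set.Ioi c, Real.exp (-(b * x))
        = ∫ x in Set.Ioi 0, Real.exp (-(b * x)) := by
    rw [← hunion]
    exact (setIntegral_union (Set.Ioc_disjoint_Ioi le_rfl) measurableSet_Ioi hIoc
      ((hint c))).symm
  have h1 := exp_neg_mul_integral_Ioi b c hb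
  have h2 := exp_neg_mul_integral_Ioi b 0 hb
  rw [h1, h2] at hsplit
  field_simp at hsplit ⊢
  linarith [hsplit, show Real.exp (-(b * 0)) = 1 by simp]

open MeasureTheory

/-- For an exponential random variable `X'` with mean `μ2`,
`E[exp(−min(ρ, X')/μ1)]` equals the stated closed form. -/
theorem exp_min_expectation
    (μ1 μ2 ρ : ℝ) (hμ1 : 0 < μ1) (hμ2 : 0 < μ2) (hρ : 0 ≤ ρ) :
    (∫ x in Set.Ioi (0:ℝ),
        Real.exp (-(min ρ x) / μ1) * ((1 / μ2) * Real.exp (-x / μ2)))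
    = (μ1 / (μ1 + μ2)) * (1 - Real.exp (-ρ * (μ1 + μ2) / (μ1 * μ2)))
      + Real.exp (-ρ / μ1) * Real.exp (-ρ / μ2) := by
  set a : ℝ := (μ1 + μ2) / (μ1 * μ2) with ha
  have ha0 : 0 < a := div_pos (by linarith) (mul_pos hμ1 hμ2)
  set f : ℝ → ℝ := fun x => Real.exp (-(min ρ x) / μ1) * ((1 / μ2) * Real.exp (-x / μ2)) with hf
  have hunion : Set.Ioc (0:ℝ) ρ ∪ Set.Ioi ρ = Set.Ioi 0 := Set.Ioc_union_Ioi_eq_Ioi hρ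
  -- f restricted to pieces
  have hIoc_eq : ∀ x ∈ Set.Ioc (0:ℝ) ρ, f x = (1 / μ2) * Real.exp (-(a * x)) := by
    intro x hx
    have : min ρ x = x := min_eq_right hx.2
    rw [hf]; simp only [this]
    have h : -x/μ1 + -x/μ2 = -(a*x) := by rw [ha]; field_simp; ring
    rw [← h, Real.exp_add]; ring
  have hIoi_eq : ∀ x ∈ Set.Ioi ρ, f x = (Real.exp (-ρ / μ1) / μ2) * Real.exp (-((1/μ2) * x)) := by
    intro x hx
    have : min ρ x = ρ := min_eq_left (le_of_lt hx)
    rw [hf]; simp only [this]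
    ring_nf
  -- integrability
  have hcont : Continuous f := by
    apply Continuous.mul
    · exact (Real.continuous_exp.comp ((continuous_const.min continuous_id).neg.div_const μ1))
    · exact continuous_const.mul (Real.continuous_exp.comp (continuous_id.neg.div_const μ2))
  have hIoc_int : IntegrableOn f (Set.Ioc 0 ρ) :=
    hcont.integrableOn_Ioc
  have hIoi_int : IntegrableOn f (Set.Ioi ρ) := by
    have : IntegrableOn (fun x => (Real.exp (-ρ / μ1) / μ2) * Real.exp (-((1/μ2) * x)))
        (Set.Ioi ρ) := by
      apply Integrable.const_mul
      simpa [neg_mul, IntegrableOn] using exp_neg_integrableOn_Ioi ρ (by positivity : (0:ℝ) < 1/μ2)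
    exact this.congr_fun (fun x hx => (hIoi_eq x hx).symm) measurableSet_Ioi
  have hsplit : (∫ x in Set.Ioi (0:ℝ), f x)
      = (∫ x in Set.Ioc (0:ℝ) ρ, f x) + ∫ x in Set.Ioi ρ, f x := by
    rw [← hunion]
    exact setIntegral_union (Set.Ioc_disjoint_Ioi le_rfl) measurableSet_Ioi hIoc_int hIoi_int
  have h1 : (∫ x in Set.Ioc (0:ℝ) ρ, f x)
      = (μ1 / (μ1 + μ2)) * (1 - Real.exp (-ρ * (μ1 + μ2) / (μ1 * μ2))) := by
    rw [setIntegral_congr_fun measurableSet_Ioc hIoc_eq, integral_const_mul,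
      exp_neg_mul_integral_Ioc a ρ ha0 hρ]
    have : -(a * ρ) = -ρ * (μ1 + μ2) / (μ1 * μ2) := by rw [ha]; field_simp
    rw [this]
    rw [ha]
    field_simp
  have h2 : (∫ x in Set.Ioi ρ, f x) = Real.exp (-ρ / μ1) * Real.exp (-ρ / μ2) := by
    rw [setIntegral_congr_fun measurableSet_Ioi hIoi_eq, integral_const_mul,
      exp_neg_mul_integral_Ioi (1/μ2) ρ (by positivity)]
    have : -(1/μ2 * ρ) = -ρ/μ2 := by field_simp
    rw [this]
    field_simp
  rw [hsplit, h1, h2]
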